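/- In a finite MDP with a proper policy, under any ε-greedy policy with ε > 0, the expected number of steps to reach a terminal state from any state is finite. -/

import Mathlib

open Filter Topology

/-- Probability of NOT having reached a terminal state in `Se` within `n` steps,
starting from `s`, when following the stochastic policy `π` in the MDP with
transition function `P`. -/
noncomputable def notHit {S A : Type*} [Fintype S] [Fintype A] [DecidableEq S]
    (P : S → A → S → ℝ) (π : S → A → ℝ) (Se : Finset S) : ℕ → S → ℝ
  | 0, s => if s ∈ Se then 0 else 1
  | n + 1, s =>
      if s ∈ Se then 0
      else ∑ a, ∑ s', π s a * P s a s' * notHit P π Se n s'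

/-- A stochastic policy is proper if from every state it eventually reaches a
terminal state with probability 1. -/
def IsProper {S A : Type*} [Fintype S] [Fintype A] [DecidableEq S]
    (P : S → A → S → ℝ) (π : S → A → ℝ) (Se : Finset S) : Prop :=
  ∀ s, Tendsto (fun n => notHit P π Se n s) atTop (𝓝 0)

set_option linter.unusedSectionVars false

section aux
variable {S A : Type*} [Fintype S] [Fintype A] [DecidableEq S]
  (P : S → A → S → ℝ) (π : S → A → ℝ) (Se : Finset S)

lemma sum_sum_one (hPsum : ∀ s a, ∑ s', P s a s' = 1) (hπsum : ∀ s, ∑ a, π s a = 1) (s : S) :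
    ∑ a, ∑ s', π s a * P s a s' = 1 := by
  simp_rw [← Finset.mul_sum, hPsum, mul_one, hπsum]

lemma notHit_nonneg (hPnn : ∀ s a s', 0 ≤ P s a s') (hπnn : ∀ s a, 0 ≤ π s a) :
    ∀ n s, 0 ≤ notHit P π Se n s := by
  intro n
  induction n with
  | zero => intro s; simp only [notHit]; split <;> norm_num
  | succ n ih =>
    intro s
    simp only [notHit]
    split
    · exact le_refl _
    · exact Finset.sum_nonneg fun a _ => Finset.sum_nonneg fun s' _ =>
        mul_nonneg (mul_nonneg (hπnn s a) (hPnn s a s')) (ih s')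

lemma notHit_le_one (hPnn : ∀ s a s', 0 ≤ P s a s') (hPsum : ∀ s a, ∑ s', P s a s' = 1)
    (hπnn : ∀ s a, 0 ≤ π s a) (hπsum : ∀ s, ∑ a, π s a = 1) :
    ∀ n s, notHit P π Se n s ≤ 1 := by
  intro n
  induction n with
  | zero => intro s; simp only [notHit]; split <;> norm_num
  | succ n ih =>
    intro s
    simp only [notHit]
    split
    · norm_num
    · calc ∑ a, ∑ s', π s a * P s a s' * notHit P π Se n s'
          ≤ ∑ a, ∑ s', π s a * P s a s' * 1 := by
            refine Finset.sum_le_sum fun a _ => Finset.sum_le_sum fun s' _ => ?_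
            exact mul_le_mul_of_nonneg_left (ih s')
              (mul_nonneg (hπnn s a) (hPnn s a s'))
        _ = 1 := by simp_rw [mul_one]; exact sum_sum_one P π hPsum hπsum s

lemma notHit_succ_le (hPnn : ∀ s a s', 0 ≤ P s a s') (hPsum : ∀ s a, ∑ s', P s a s' = 1)
    (hπnn : ∀ s a, 0 ≤ π s a) (hπsum : ∀ s, ∑ a, π s a = 1) :
    ∀ n s, notHit P π Se (n + 1) s ≤ notHit P π Se n s := by
  intro n
  induction n with
  | zero =>
    intro s
    simp only [notHit]
    split
    · norm_num
    · calc ∑ a, ∑ s', π s a * P s a s' * notHit P π Se 0 s'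
          ≤ ∑ a, ∑ s', π s a * P s a s' * 1 := by
            refine Finset.sum_le_sum fun a _ => Finset.sum_le_sum fun s' _ => ?_
            exact mul_le_mul_of_nonneg_left
              (notHit_le_one P π Se hPnn hPsum hπnn hπsum 0 s')
              (mul_nonneg (hπnn s a) (hPnn s a s'))
        _ = 1 := by simp_rw [mul_one]; exact sum_sum_one P π hPsum hπsum s
  | succ n ih =>
    intro s
    show notHit P π Se (n + 1 + 1) s ≤ notHit P π Se (n + 1) s
    simp only [notHit]
    split
    · norm_num
    · refine Finset.sum_le_sum fun a _ => Finset.sum_le_sum fun s' _ => ?_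
      exact mul_le_mul_of_nonneg_left (ih s') (mul_nonneg (hπnn s a) (hPnn s a s'))

lemma notHit_antitone (hPnn : ∀ s a s', 0 ≤ P s a s') (hPsum : ∀ s a, ∑ s', P s a s' = 1)
    (hπnn : ∀ s a, 0 ≤ π s a) (hπsum : ∀ s, ∑ a, π s a = 1) (s : S) :
    Antitone (fun n => notHit P π Se n s) :=
  antitone_nat_of_succ_le fun n => notHit_succ_le P π Se hPnn hPsum hπnn hπsum n s

lemma hit_ratio (πe : S → A → ℝ)
    (hPnn : ∀ s a s', 0 ≤ P s a s') (hPsum : ∀ s a, ∑ s', P s a s' = 1)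
    (hπnn : ∀ s a, 0 ≤ π s a) (hπsum : ∀ s, ∑ a, π s a = 1)
    (hπenn : ∀ s a, 0 ≤ πe s a) (hπesum : ∀ s, ∑ a, πe s a = 1)
    (δ : ℝ) (hδ0 : 0 ≤ δ) (hδ1 : δ ≤ 1) (hδπ : ∀ s a, δ * π s a ≤ πe s a) :
    ∀ n s, δ ^ n * (1 - notHit P π Se n s) ≤ 1 - notHit P πe Se n s := by
  intro n
  induction n with
  | zero => intro s; simp [notHit]
  | succ n ih =>
    intro s
    simp only [notHit]
    split
    · nlinarith [pow_le_one₀ hδ0 hδ1 (n := n+1), pow_nonneg hδ0 (n+1),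
        notHit_le_one P π Se hPnn hPsum hπnn hπsum (n+1) s,
        notHit_nonneg P πe Se hPnn hπenn (n+1) s]
    · have key : ∀ (ρ : S → A → ℝ), (∀ s a, 0 ≤ ρ s a) → (∀ s, ∑ a, ρ s a = 1) →
          1 - (∑ a, ∑ s', ρ s a * P s a s' * notHit P ρ Se n s')
            = ∑ a, ∑ s', ρ s a * P s a s' * (1 - notHit P ρ Se n s') := by
        intro ρ h1 h2
        simp_rw [mul_sub, mul_one, Finset.sum_sub_distrib]
        rw [sum_sum_one P ρ hPsum h2 s]
      rw [key πe hπenn hπesum]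
      have keyπ : 1 - (∑ a, ∑ s', π s a * P s a s' * notHit P π Se n s')
            = ∑ a, ∑ s', π s a * P s a s' * (1 - notHit P π Se n s') := by
        simp_rw [mul_sub, mul_one, Finset.sum_sub_distrib]
        rw [sum_sum_one P π hPsum hπsum s]
      rw [keyπ, Finset.mul_sum]
      simp_rw [Finset.mul_sum]
      refine Finset.sum_le_sum fun a _ => Finset.sum_le_sum fun s' _ => ?_
      have h1 : δ ^ (n+1) * (π s a * P s a s' * (1 - notHit P π Se n s'))
          = (δ * π s a) * P s a s' * (δ ^ n * (1 - notHit P π Se n s')) := by ring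
      rw [h1]
      have hQ1 : notHit P π Se n s' ≤ 1 := notHit_le_one P π Se hPnn hPsum hπnn hπsum n s'
      refine mul_le_mul (mul_le_mul_of_nonneg_right (hδπ s a) (hPnn s a s')) (ih s')
        (mul_nonneg (pow_nonneg hδ0 n) (by linarith)) (mul_nonneg (hπenn s a) (hPnn s a s'))

lemma notHit_peel (πe : S → A → ℝ)
    (hPnn : ∀ s a s', 0 ≤ P s a s') (hπenn : ∀ s a, 0 ≤ πe s a)
    (m : ℕ) (c : ℝ) (hc : 0 ≤ c) (hm : ∀ s, notHit P πe Se m s ≤ c) :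
    ∀ n s, notHit P πe Se (n + m) s ≤ c * notHit P πe Se n s := by
  intro n
  induction n with
  | zero =>
    intro s
    simp only [Nat.zero_add]
    by_cases hs : s ∈ Se
    · have : notHit P πe Se m s = 0 := by cases m <;> simp [notHit, hs]
      simp [this, notHit, hs]
    · simp only [notHit, if_neg hs, mul_one]
      exact hm s
  | succ n ih =>
    intro s
    have : n + 1 + m = (n + m) + 1 := by omega
    rw [this]
    show notHit P πe Se ((n + m) + 1) s ≤ c * notHit P πe Se (n + 1) s
    simp only [notHit]
    split
    · simp
    · rw [Finset.mul_sum]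
      simp_rw [Finset.mul_sum]
      refine Finset.sum_le_sum fun a _ => Finset.sum_le_sum fun s' _ => ?_
      calc πe s a * P s a s' * notHit P πe Se (n + m) s'
          ≤ πe s a * P s a s' * (c * notHit P πe Se n s') :=
            mul_le_mul_of_nonneg_left (ih s') (mul_nonneg (hπenn s a) (hPnn s a s'))
        _ = c * (πe s a * P s a s' * notHit P πe Se n s') := by ring

end aux

lemma summable_pow_div {M : ℝ} (h0 : 0 ≤ M) (h1 : M < 1) (N : ℕ) (hN : 0 < N) :
    Summable (fun n : ℕ => M ^ (n / N)) := by
  haveI : NeZero N := ⟨hN.ne'⟩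
  have hg : Summable (fun p : ℕ × Fin N => M ^ p.1) := by
    refine (summable_prod_of_nonneg (fun p => pow_nonneg h0 _)).mpr ⟨fun b => ?_, ?_⟩
    · exact Summable.of_finite
    · simp only [tsum_fintype, Finset.sum_const, Finset.card_univ, Fintype.card_fin,
        nsmul_eq_mul]
      exact (summable_geometric_of_lt_one h0 h1).mul_left _
  have := hg.comp_injective (Nat.divModEquiv N).injective
  convert this using 1
  · rfl
  · funext n; rfl


/-- If a finite MDP has a proper policy, then any ε-greedy policy (ε > 0) is
also proper. -/
theorem eps_greedy_finite_expected_hitting_time {S A : Type*} [Fintype S] [Fintype A] [Nonempty A] [DecidableEq S]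
    (P : S → A → S → ℝ)
    (hPnn : ∀ s a s', 0 ≤ P s a s') (hPsum : ∀ s a, ∑ s', P s a s' = 1)
    (Se : Finset S)
    (π : S → A → ℝ)
    (hπnn : ∀ s a, 0 ≤ π s a) (hπsum : ∀ s, ∑ a, π s a = 1)
    (hproper : IsProper P π Se)
    (ε : ℝ) (hε : 0 < ε)
    (πe : S → A → ℝ)
    (hπenn : ∀ s a, 0 ≤ πe s a) (hπesum : ∀ s, ∑ a, πe s a = 1)
    (hgreedy : ∀ s a, ε / (Fintype.card A : ℝ) ≤ πe s a) :
    ∀ s, Summable (fun n => notHit P πe Se n s) := by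
  intro s0
  haveI : Nonempty S := ⟨s0⟩
  set δ : ℝ := ε / (Fintype.card A : ℝ) with hδdef
  have hcard : (0:ℝ) < (Fintype.card A : ℝ) := by
    exact_mod_cast Fintype.card_pos
  have hδ0 : 0 < δ := div_pos hε hcard
  have hδ1 : δ ≤ 1 := by
    have h1 := hgreedy s0 (Classical.arbitrary A)
    have h2 : πe s0 (Classical.arbitrary A) ≤ 1 := by
      rw [← hπesum s0]
      exact Finset.single_le_sum (fun a _ => hπenn s0 a) (Finset.mem_univ _)
    linarith
  have hδπ : ∀ s a, δ * π s a ≤ πe s a := by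
    intro s a
    have hπ1 : π s a ≤ 1 := by
      rw [← hπsum s]
      exact Finset.single_le_sum (fun a _ => hπnn s a) (Finset.mem_univ _)
    calc δ * π s a ≤ δ * 1 := mul_le_mul_of_nonneg_left hπ1 hδ0.le
      _ = δ := mul_one δ
      _ ≤ πe s a := hgreedy s a
  -- choose horizon per state
  have hex : ∀ s : S, ∃ N, notHit P π Se N s < 1 := by
    intro s
    exact ((hproper s).eventually (gt_mem_nhds one_pos)).exists
  choose Nf hNf using hex
  set N : ℕ := Finset.univ.sup Nf + 1 with hNdef
  have hNpos : 0 < N := Nat.succ_pos _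
  have hQN : ∀ s, notHit P π Se N s < 1 := by
    intro s
    refine lt_of_le_of_lt ?_ (hNf s)
    exact notHit_antitone P π Se hPnn hPsum hπnn hπsum s
      (le_trans (Finset.le_sup (Finset.mem_univ s)) (Nat.le_succ _))
  -- contraction constant
  set M : ℝ := Finset.univ.sup' Finset.univ_nonempty (fun s => notHit P πe Se N s) with hMdef
  have hMle : ∀ s, notHit P πe Se N s ≤ M := fun s =>
    Finset.le_sup' _ (Finset.mem_univ s)
  have hM0 : 0 ≤ M :=
    le_trans (notHit_nonneg P πe Se hPnn hπenn N s0) (hMle s0)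
  have hM1 : M < 1 := by
    rw [hMdef, Finset.sup'_lt_iff]
    intro s _
    have hr := hit_ratio P π Se πe hPnn hPsum hπnn hπsum hπenn hπesum δ hδ0.le hδ1 hδπ N s
    have hp : 0 < δ ^ N := pow_pos hδ0 N
    nlinarith [hQN s]
  have hk : ∀ k s, notHit P πe Se (k * N) s ≤ M ^ k := by
    intro k
    induction k with
    | zero =>
      intro s
      simpa using notHit_le_one P πe Se hPnn hPsum hπenn hπesum 0 s
    | succ k ih =>
      intro s
      have harith : (k + 1) * N = k * N + N := by ring
      rw [harith]
      calc notHit P πe Se (k * N + N) s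
          ≤ M * notHit P πe Se (k * N) s :=
            notHit_peel P Se πe hPnn hπenn N M hM0 hMle (k * N) s
        _ ≤ M * M ^ k := mul_le_mul_of_nonneg_left (ih s) hM0
        _ = M ^ (k + 1) := by ring
  refine Summable.of_nonneg_of_le (notHit_nonneg P πe Se hPnn hπenn · s0)
    (fun n => ?_) (summable_pow_div hM0 hM1 N hNpos)
  calc notHit P πe Se n s0
      ≤ notHit P πe Se (n / N * N) s0 :=
        notHit_antitone P πe Se hPnn hPsum hπenn hπesum s0 (Nat.div_mul_le_self n N)
    _ ≤ M ^ (n / N) := hk (n / N) s0
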